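/- Let x ∈ ℝ^n with ‖x‖_∞ ≤ C (C > 0), and let j be an index, c a constant. Setting w_j = 2C and w_i = 0 for i ≠ j, the ℓ∞-dist neuron output ‖x − w‖_∞ − 2C + c equals −x_j + c. -/
import Mathlib


/-- Negation map realized by an ℓ∞-dist neuron: for `‖x‖_∞ ≤ C`, taking the
weight vector `w` with `w_j = 2C` and `w_i = 0` otherwise,
`‖x − w‖_∞ − 2C + c = −x_j + c`. -/
theorem linf_neuron_negation_map (n : ℕ) (C : ℝ) (hC : 0 < C)
    (x : Fin n → ℝ) (hx : ‖x‖ ≤ C) (j : Fin n) (c : ℝ) :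
    ‖x - (fun i => if i = j then 2 * C else 0)‖ - 2 * C + c = -(x j) + c := by
  have hxj : |x j| ≤ C := le_trans (norm_le_pi_norm x j) hx
  have hxj' := abs_le.mp hxj
  have key : ‖x - (fun i => if i = j then 2 * C else 0)‖ = 2 * C - x j := by
    apply le_antisymm
    · apply pi_norm_le_iff_of_nonneg (by linarith) |>.mpr
      intro i
      by_cases hi : i = j
      · subst hi
        simp only [Pi.sub_apply, if_pos rfl, Real.norm_eq_abs]
        rw [abs_le]; constructor <;> simp <;> linarith
      · have hxi := abs_le.mp (le_trans (norm_le_pi_norm x i) hx)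
        simp only [Pi.sub_apply, if_neg hi, Real.norm_eq_abs, sub_zero]
        rw [abs_le]; constructor <;> linarith
    · have := norm_le_pi_norm (x - (fun i => if i = j then 2 * C else 0)) j
      simp only [Pi.sub_apply, if_pos rfl, Real.norm_eq_abs] at this
      calc 2 * C - x j = |x j - 2 * C| := by rw [abs_of_nonpos (by linarith)]; ring
        _ ≤ _ := this
  rw [key]; ring
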